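/- Let Z₁ and Z₂ be real-valued random variables on a probability space, let K₁, K₂ > 0 and r₁, r₂ ≥ 1, and suppose that for i = 1, 2 and every t ≥ 0, P(|Z_i| > t) ≤ exp(1 − (t/K_i)^{r_i}). Then for every t > 0, P(|Z₁·Z₂| > t) ≤ 2·exp(1 − (t/(K₁K₂))^{r}), where r = r₁r₂/(r₁+r₂). (Product tail bound; first step in the proof of Lemma 2.) -/

import Mathlib

open MeasureTheory

/-- Product tail bound (first step of the proof of Lemma 2): if
`P(|Zᵢ| > t) ≤ exp (1 - (t/Kᵢ)^{rᵢ})` for `i = 1, 2` and all `t ≥ 0`, then for all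
`t > 0`, `P(|Z₁Z₂| > t) ≤ 2 * exp (1 - (t/(K₁K₂))^r)` with `r = r₁r₂/(r₁+r₂)`. -/
theorem product_tail_bound
    {Ω : Type*} [MeasurableSpace Ω] (μ : Measure Ω) [IsProbabilityMeasure μ]
    (Z₁ Z₂ : Ω → ℝ) (hZ₁ : Measurable Z₁) (hZ₂ : Measurable Z₂)
    (K₁ K₂ r₁ r₂ : ℝ) (hK₁ : 0 < K₁) (hK₂ : 0 < K₂) (hr₁ : 1 ≤ r₁) (hr₂ : 1 ≤ r₂)
    (htail₁ : ∀ t : ℝ, 0 ≤ t →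
      (μ {ω | t < |Z₁ ω|}).toReal ≤ Real.exp (1 - (t / K₁) ^ r₁))
    (htail₂ : ∀ t : ℝ, 0 ≤ t →
      (μ {ω | t < |Z₂ ω|}).toReal ≤ Real.exp (1 - (t / K₂) ^ r₂)) :
    ∀ t : ℝ, 0 < t →
      (μ {ω | t < |Z₁ ω * Z₂ ω|}).toReal ≤
        2 * Real.exp (1 - (t / (K₁ * K₂)) ^ (r₁ * r₂ / (r₁ + r₂))) := by
  intro t ht
  have hK₁₂ : 0 < K₁ * K₂ := mul_pos hK₁ hK₂
  set s : ℝ := t / (K₁ * K₂) with hs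
  have hs0 : 0 < s := div_pos ht hK₁₂
  have hr12 : 0 < r₁ + r₂ := by linarith
  set a : ℝ := r₁ / (r₁ + r₂) with ha
  set M : ℝ := K₂ * s ^ a with hM
  have hM0 : 0 < M := mul_pos hK₂ (Real.rpow_pos_of_pos hs0 _)
  -- set inclusion
  have hsub : {ω | t < |Z₁ ω * Z₂ ω|} ⊆ {ω | t / M < |Z₁ ω|} ∪ {ω | M < |Z₂ ω|} := by
    intro ω hω
    rw [Set.mem_union]
    by_contra h
    push_neg at h
    obtain ⟨h1, h2⟩ := h
    simp only [Set.mem_setOf_eq, not_lt] at h1 h2 hω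
    have : |Z₁ ω * Z₂ ω| ≤ (t / M) * M := by
      rw [abs_mul]
      exact mul_le_mul h1 h2 (abs_nonneg _) (div_nonneg ht.le hM0.le)
    rw [div_mul_cancel₀ _ hM0.ne'] at this
    linarith
  have hmono : μ {ω | t < |Z₁ ω * Z₂ ω|} ≤
      μ {ω | t / M < |Z₁ ω|} + μ {ω | M < |Z₂ ω|} :=
    (measure_mono hsub).trans (measure_union_le _ _)
  have hfin1 : μ {ω | t / M < |Z₁ ω|} ≠ ⊤ := measure_ne_top _ _
  have hfin2 : μ {ω | M < |Z₂ ω|} ≠ ⊤ := measure_ne_top _ _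
  have htR : (μ {ω | t < |Z₁ ω * Z₂ ω|}).toReal ≤
      (μ {ω | t / M < |Z₁ ω|}).toReal + (μ {ω | M < |Z₂ ω|}).toReal := by
    rw [← ENNReal.toReal_add hfin1 hfin2]
    exact ENNReal.toReal_mono (by simp [hfin1, hfin2]) hmono
  -- compute the two exponents
  have hexp2 : (M / K₂) ^ r₂ = s ^ (r₁ * r₂ / (r₁ + r₂)) := by
    rw [hM, mul_comm, mul_div_assoc, div_self hK₂.ne', mul_one,
      ← Real.rpow_mul hs0.le]
    congr 1
    rw [ha]
    field_simp
  have hexp1 : (t / M / K₁) ^ r₁ = s ^ (r₁ * r₂ / (r₁ + r₂)) := by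
    have hts : t = s * (K₁ * K₂) := by rw [hs]; field_simp
    have hsa : s ^ a ≠ 0 := (Real.rpow_pos_of_pos hs0 a).ne'
    have htM : t / M / K₁ = s ^ (1 - a) := by
      have h1 : t / M / K₁ = s / s ^ a := by
        rw [hM, hts]; field_simp
      rw [h1, Real.rpow_sub hs0, Real.rpow_one]
    rw [htM, ← Real.rpow_mul hs0.le]
    congr 1
    rw [ha]
    field_simp
    ring
  calc (μ {ω | t < |Z₁ ω * Z₂ ω|}).toReal
      ≤ (μ {ω | t / M < |Z₁ ω|}).toReal + (μ {ω | M < |Z₂ ω|}).toReal := htR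
    _ ≤ Real.exp (1 - (t / M / K₁) ^ r₁) + Real.exp (1 - (M / K₂) ^ r₂) := by
        gcongr
        · exact htail₁ _ (div_nonneg ht.le hM0.le)
        · exact htail₂ _ hM0.le
    _ = 2 * Real.exp (1 - s ^ (r₁ * r₂ / (r₁ + r₂))) := by
        rw [hexp1, hexp2]; ring
    _ = 2 * Real.exp (1 - (t / (K₁ * K₂)) ^ (r₁ * r₂ / (r₁ + r₂))) := by rw [hs]
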